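/- The map ψ_k : S¹ × B^{2n}(R₀) → S¹ × B^{2n}(R₀/√(1+kR₀²)) defined by ψ_k(θ, w₁, …, w_n) = (θ, e^{2πikθ}w₁/√(1+k|w|²), …, e^{2πikθ}w_n/√(1+k|w|²)) pulls back the contact form dθ − (r')²·α_std (where r' is the radial coordinate in the target and α_std is the standard contact form on spheres, i.e. the form dθ − Σ(x_j dy_j − y_j dx_j) in Cartesian coordinates) to a positive function multiple of the form dθ − r²·α_std on the source; in particular ψ_k is a contactomorphism for the standard contact structures ker(dθ − r²α_std). -/

import Mathlib

open Set Complex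
open scoped InnerProductSpace

noncomputable section

/-- The cylinder `S¹ × B^{2n}(R)` is modelled on `ℝ × ℂⁿ` (the first coordinate is the
`2π`-periodic angle `θ`); the standard contact form `dθ − r²α_std = dθ − Σ(xⱼdyⱼ − yⱼdxⱼ)`,
evaluated at the point `p` on the tangent vector `v`, is `v.1 − Im ⟪p.2, v.2⟫`. -/
def ηstd (n : ℕ) (p : ℝ × EuclideanSpace ℂ (Fin n)) :
    ℝ × EuclideanSpace ℂ (Fin n) → ℝ :=
  fun v => v.1 - (⟪p.2, v.2⟫_ℂ).im

/-- The squeezing map `ψ_k(θ, w) = (θ, e^{ikθ}w/√(1+k‖w‖²))` (the angle `θ ∈ ℝ/2πℤ`,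
rotation by `k` full turns as `θ` goes once around the circle). -/
def ψ (n k : ℕ) : ℝ × EuclideanSpace ℂ (Fin n) → ℝ × EuclideanSpace ℂ (Fin n) :=
  fun p => (p.1, (Complex.exp (k * p.1 * Complex.I) / (Real.sqrt (1 + k * ‖p.2‖ ^ 2) : ℂ)) • p.2)

/-- The inverse of the squeezing map. -/
def cbχ (n k : ℕ) : ℝ × EuclideanSpace ℂ (Fin n) → ℝ × EuclideanSpace ℂ (Fin n) :=
  fun p => (p.1, (Complex.exp (-(k * p.1 * Complex.I)) /
    (Real.sqrt (1 - k * ‖p.2‖ ^ 2) : ℂ)) • p.2)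

lemma cb_mono_aux (k : ℕ) {a b : ℝ} (ha : 0 ≤ a) (hab : a < b) :
    a / Real.sqrt (1 + k*a^2) < b / Real.sqrt (1 + k*b^2) := by
  have hb : 0 < b := lt_of_le_of_lt ha hab
  have h1 : (0:ℝ) < 1 + k*a^2 := by positivity
  have h2 : (0:ℝ) < 1 + k*b^2 := by positivity
  rw [div_lt_div_iff₀ (Real.sqrt_pos.2 h1) (Real.sqrt_pos.2 h2)]
  calc a * Real.sqrt (1+k*b^2) = Real.sqrt (a^2*(1+k*b^2)) := by
        rw [Real.sqrt_mul (sq_nonneg a), Real.sqrt_sq ha]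
    _ < Real.sqrt (b^2*(1+k*a^2)) := Real.sqrt_lt_sqrt (by positivity) (by nlinarith)
    _ = b * Real.sqrt (1+k*a^2) := by rw [Real.sqrt_mul (sq_nonneg b), Real.sqrt_sq hb.le]

lemma cb_norm_psi2 (n k : ℕ) (p : ℝ × EuclideanSpace ℂ (Fin n)) :
    ‖(ψ n k p).2‖ = ‖p.2‖ / Real.sqrt (1 + k*‖p.2‖^2) := by
  have h : ((k:ℂ) * p.1 * Complex.I).re = 0 := by simp
  simp [ψ, norm_smul, norm_div, Complex.norm_exp, h,
    Complex.norm_real, _root_.abs_of_nonneg (Real.sqrt_nonneg _)]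
  ring

lemma cb_norm_chi2 (n k : ℕ) (p : ℝ × EuclideanSpace ℂ (Fin n)) :
    ‖(cbχ n k p).2‖ = ‖p.2‖ / Real.sqrt (1 - k*‖p.2‖^2) := by
  have h : (-((k:ℂ) * p.1 * Complex.I)).re = 0 := by simp
  simp [cbχ, norm_smul, norm_div, Complex.norm_exp, h,
    Complex.norm_real, _root_.abs_of_nonneg (Real.sqrt_nonneg _)]
  ring

lemma cb_left_inv (n k : ℕ) (p : ℝ × EuclideanSpace ℂ (Fin n)) : cbχ n k (ψ n k p) = p := by
  have hpos : (0:ℝ) < 1 + k*‖p.2‖^2 := by positivity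
  have hs0 : Real.sqrt (1 + k*‖p.2‖^2) ≠ 0 := by positivity
  have hn : ‖(ψ n k p).2‖^2 = ‖p.2‖^2 / (1 + k*‖p.2‖^2) := by
    rw [cb_norm_psi2, div_pow, Real.sq_sqrt hpos.le]
  have ht : 1 - (k:ℝ)*‖(ψ n k p).2‖^2 = (1 + k*‖p.2‖^2)⁻¹ := by
    rw [hn]; field_simp; ring
  have hfst : (ψ n k p).1 = p.1 := rfl
  ext1
  · exact hfst
  · show (Complex.exp (-(k * (ψ n k p).1 * Complex.I)) /
        (Real.sqrt (1 - k * ‖(ψ n k p).2‖ ^ 2) : ℂ)) • (ψ n k p).2 = p.2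
    rw [ht, hfst, Real.sqrt_inv]
    show _ • ((Complex.exp (k * p.1 * Complex.I) /
        (Real.sqrt (1 + k * ‖p.2‖ ^ 2) : ℂ)) • p.2) = p.2
    rw [smul_smul]
    have hE : Complex.exp (-((k:ℂ)*p.1*Complex.I)) * Complex.exp ((k:ℂ)*p.1*Complex.I) = 1 := by
      rw [← Complex.exp_add]; simp
    have hcs : ((Real.sqrt (1 + (k:ℝ) * ‖p.2‖ ^ 2) : ℝ) : ℂ) ≠ 0 := by exact_mod_cast hs0
    have : (Complex.exp (-((k:ℂ) * p.1 * Complex.I)) /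
          (((Real.sqrt (1 + (k:ℝ) * ‖p.2‖ ^ 2))⁻¹ : ℝ) : ℂ)) *
        (Complex.exp ((k:ℂ) * p.1 * Complex.I) /
          ((Real.sqrt (1 + (k:ℝ) * ‖p.2‖ ^ 2) : ℝ) : ℂ)) = 1 := by
      push_cast
      field_simp
      linear_combination hE
    rw [this, one_smul]

lemma cb_right_inv (n k : ℕ) (p : ℝ × EuclideanSpace ℂ (Fin n))
    (h : (0:ℝ) < 1 - k*‖p.2‖^2) : ψ n k (cbχ n k p) = p := by
  have hs0 : Real.sqrt (1 - k*‖p.2‖^2) ≠ 0 := by positivity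
  have hn : ‖(cbχ n k p).2‖^2 = ‖p.2‖^2 / (1 - k*‖p.2‖^2) := by
    rw [cb_norm_chi2, div_pow, Real.sq_sqrt h.le]
  have ht : 1 + (k:ℝ)*‖(cbχ n k p).2‖^2 = (1 - k*‖p.2‖^2)⁻¹ := by
    rw [hn]; field_simp; ring
  have hfst : (cbχ n k p).1 = p.1 := rfl
  ext1
  · exact hfst
  · show (Complex.exp (k * (cbχ n k p).1 * Complex.I) /
        (Real.sqrt (1 + k * ‖(cbχ n k p).2‖ ^ 2) : ℂ)) • (cbχ n k p).2 = p.2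
    rw [ht, hfst, Real.sqrt_inv]
    show _ • ((Complex.exp (-(k * p.1 * Complex.I)) /
        (Real.sqrt (1 - k * ‖p.2‖ ^ 2) : ℂ)) • p.2) = p.2
    rw [smul_smul]
    have hE : Complex.exp ((k:ℂ)*p.1*Complex.I) * Complex.exp (-((k:ℂ)*p.1*Complex.I)) = 1 := by
      rw [← Complex.exp_add]; simp
    have hcs : ((Real.sqrt (1 - (k:ℝ) * ‖p.2‖ ^ 2) : ℝ) : ℂ) ≠ 0 := by exact_mod_cast hs0
    have : (Complex.exp ((k:ℂ) * p.1 * Complex.I) /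
          (((Real.sqrt (1 - (k:ℝ) * ‖p.2‖ ^ 2))⁻¹ : ℝ) : ℂ)) *
        (Complex.exp (-((k:ℂ) * p.1 * Complex.I)) /
          ((Real.sqrt (1 - (k:ℝ) * ‖p.2‖ ^ 2) : ℝ) : ℂ)) = 1 := by
      push_cast
      field_simp
      linear_combination hE
    rw [this, one_smul]

lemma cb_chi_bound (k : ℕ) {R₀ z : ℝ} (hR₀ : 0 < R₀) (hz0 : 0 ≤ z)
    (hz : z < R₀ / Real.sqrt (1 + k*R₀^2)) :
    (0:ℝ) < 1 - k*z^2 ∧ z / Real.sqrt (1 - k*z^2) < R₀ := by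
  have hSpos : (0:ℝ) < 1 + k*R₀^2 := by positivity
  have hS : 0 < Real.sqrt (1 + k*R₀^2) := Real.sqrt_pos.2 hSpos
  have hS2 : (Real.sqrt (1 + k*R₀^2))^2 = 1 + k*R₀^2 := Real.sq_sqrt hSpos.le
  have h1 : z * Real.sqrt (1 + k*R₀^2) < R₀ := (lt_div_iff₀ hS).1 hz
  have h2 : z^2 * (1 + k*R₀^2) < R₀^2 := by
    nlinarith [mul_nonneg hz0 hS.le]
  have hp : (0:ℝ) < 1 - k*z^2 := by nlinarith [sq_nonneg z, hSpos]
  refine ⟨hp, ?_⟩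
  rw [div_lt_iff₀ (Real.sqrt_pos.2 hp)]
  calc z = Real.sqrt (z^2) := (Real.sqrt_sq hz0).symm
    _ < Real.sqrt (R₀^2*(1 - k*z^2)) := Real.sqrt_lt_sqrt (sq_nonneg z) (by nlinarith)
    _ = R₀ * Real.sqrt (1 - k*z^2) := by rw [Real.sqrt_mul (sq_nonneg R₀), Real.sqrt_sq hR₀.le]

open scoped RealInnerProductSpace in
lemma cb_key (n k : ℕ) (p v : ℝ × EuclideanSpace ℂ (Fin n)) :
    ηstd n (ψ n k p) (fderiv ℝ (ψ n k) p v) = (1 + (k:ℝ)*‖p.2‖^2)⁻¹ * ηstd n p v := by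
  set w := p.2 with hw
  have hpos : (0:ℝ) < 1 + k*‖w‖^2 := by positivity
  have hs0 : Real.sqrt (1 + k*‖w‖^2) ≠ 0 := by positivity
  have hq : HasFDerivAt (fun p : ℝ × EuclideanSpace ℂ (Fin n) => 1 + (k:ℝ)*‖p.2‖^2) _ p :=
    ((hasFDerivAt_snd.norm_sq).const_mul (k:ℝ)).const_add 1
  have hsq : HasDerivAt (fun x : ℝ => (Real.sqrt x)⁻¹)
      (-(1/(2*Real.sqrt (1+k*‖w‖^2))) / (Real.sqrt (1+k*‖w‖^2))^2) (1+k*‖w‖^2) :=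
    (Real.hasDerivAt_sqrt hpos.ne').inv hs0
  have hinv : HasFDerivAt (fun p : ℝ × EuclideanSpace ℂ (Fin n) => ((Real.sqrt (1+(k:ℝ)*‖p.2‖^2))⁻¹ : ℝ)) _ p :=
    HasFDerivAt.comp (g := fun x : ℝ => (Real.sqrt x)⁻¹)
      (f := fun p : ℝ × EuclideanSpace ℂ (Fin n) => 1 + (k:ℝ)*‖p.2‖^2) p hsq.hasFDerivAt hq
  have hinvC : HasFDerivAt (fun p : ℝ × EuclideanSpace ℂ (Fin n) => (((Real.sqrt (1+(k:ℝ)*‖p.2‖^2))⁻¹ : ℝ) : ℂ)) _ p :=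
    Complex.ofRealCLM.hasFDerivAt.comp p hinv
  have hlin : HasDerivAt (fun t : ℝ => (k:ℂ)*t*Complex.I) ((k:ℂ)*Complex.I) p.1 := by
    simpa using (((hasDerivAt_id p.1).ofReal_comp).const_mul (k:ℂ)).mul_const Complex.I
  have hc : HasFDerivAt (fun p : ℝ × EuclideanSpace ℂ (Fin n) => Complex.exp ((k:ℂ)*p.1*Complex.I)) _ p :=
    (hlin.cexp).hasFDerivAt.comp p hasFDerivAt_fst
  have ha := hc.mul hinvC
  have hψ2 := ha.smul hasFDerivAt_snd
  have hψ : HasFDerivAt (fun p : ℝ × EuclideanSpace ℂ (Fin n) =>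
      (p.1, (Complex.exp ((k:ℂ)*p.1*Complex.I) * (((Real.sqrt (1+(k:ℝ)*‖p.2‖^2))⁻¹ : ℝ) : ℂ)) • p.2)) _ p :=
    HasFDerivAt.prodMk hasFDerivAt_fst hψ2
  have hfun : (ψ n k) = (fun p : ℝ × EuclideanSpace ℂ (Fin n) =>
      (p.1, (Complex.exp ((k:ℂ)*p.1*Complex.I) * (((Real.sqrt (1+(k:ℝ)*‖p.2‖^2))⁻¹ : ℝ) : ℂ)) • p.2)) := by
    funext q
    simp [ψ, div_eq_mul_inv, Complex.ofReal_inv]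
  rw [hfun, hψ.fderiv]
  simp only [ContinuousLinearMap.prod_apply, ContinuousLinearMap.coe_comp', Function.comp_apply,
    ContinuousLinearMap.coe_fst', ContinuousLinearMap.coe_snd', ContinuousLinearMap.add_apply,
    ContinuousLinearMap.coe_smul', Pi.smul_apply, ContinuousLinearMap.smulRight_apply,
    ContinuousLinearMap.one_apply, smul_eq_mul, ContinuousLinearMap.toSpanSingleton_apply, Pi.mul_apply,
    innerSL_apply_apply, ηstd]
  set s := Real.sqrt (1 + (k:ℝ)*‖w‖^2) with hsdef
  set c := Complex.exp ((k:ℂ)*p.1*Complex.I) with hcdef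
  have hc1 : c.re^2 + c.im^2 = 1 := by
    have habs : ‖c‖ = 1 := by
      rw [hcdef, Complex.norm_exp]; simp
    have h2 : Complex.normSq c = 1 := by
      rw [← Complex.sq_norm, habs]; norm_num
    simpa [Complex.normSq_apply, sq] using h2
  have hss : s^2 = 1 + (k:ℝ)*‖w‖^2 := Real.sq_sqrt hpos.le
  have hsgt : 0 < s := Real.sqrt_pos.2 hpos
  have hww : ⟪p.2, p.2⟫_ℂ = ((‖p.2‖^2 : ℝ) : ℂ) := by
    rw [inner_self_eq_norm_sq_to_K]; norm_cast
  simp only [inner_smul_left, inner_add_right, inner_smul_right, hww,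
    Complex.ofRealCLM_apply, map_mul, Complex.conj_ofReal, smul_eq_mul, nsmul_eq_mul]
  rw [← hss]
  set z := ⟪p.2, v.2⟫_ℂ with hz
  set ρ := ⟪p.2, v.2⟫_ℝ with hρ
  set X := ‖p.2‖ with hX
  simp only [Complex.real_smul, Complex.mul_im, Complex.mul_re, Complex.add_im, Complex.add_re,
    Complex.ofReal_re, Complex.ofReal_im, Complex.I_re, Complex.I_im, Complex.conj_re,
    Complex.conj_im, ← Complex.ofReal_pow, Complex.inv_re, Complex.inv_im, Complex.normSq_ofReal,
    Complex.natCast_re, Complex.natCast_im]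
  field_simp
  ring_nf
  linear_combination (-2*v.1*s^2*(k:ℝ)*X^2 - 2*s^2*z.im)*hc1 + (2*v.1*s^2)*hss


theorem contact_blowup_stmt0 (n k : ℕ) (hn : 0 < n) (hk : 0 < k) (R₀ : ℝ) (hR₀ : 0 < R₀) :
    Set.BijOn (ψ n k)
      ((univ : Set ℝ) ×ˢ Metric.ball (0 : EuclideanSpace ℂ (Fin n)) R₀)
      ((univ : Set ℝ) ×ˢ Metric.ball (0 : EuclideanSpace ℂ (Fin n))
        (R₀ / Real.sqrt (1 + k * R₀ ^ 2))) ∧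
    ∃ f : ℝ × EuclideanSpace ℂ (Fin n) → ℝ,
      (∀ p ∈ (univ : Set ℝ) ×ˢ Metric.ball (0 : EuclideanSpace ℂ (Fin n)) R₀, 0 < f p) ∧
      ∀ p ∈ (univ : Set ℝ) ×ˢ Metric.ball (0 : EuclideanSpace ℂ (Fin n)) R₀,
        ∀ v : ℝ × EuclideanSpace ℂ (Fin n),
          ηstd n (ψ n k p) (fderiv ℝ (ψ n k) p v) = f p * ηstd n p v := by
  constructor
  · refine Set.InvOn.bijOn (f' := cbχ n k) ⟨fun p _ => cb_left_inv n k p, fun p hp => ?_⟩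
      (fun p hp => ?_) (fun p hp => ?_)
    · refine cb_right_inv n k p ?_
      have hz : ‖p.2‖ < R₀ / Real.sqrt (1 + k * R₀ ^ 2) := by
        simpa [mem_ball_zero_iff] using hp.2
      exact (cb_chi_bound k hR₀ (norm_nonneg _) hz).1
    · refine ⟨mem_univ _, ?_⟩
      have hz : ‖p.2‖ < R₀ := by simpa [mem_ball_zero_iff] using hp.2
      rw [mem_ball_zero_iff, cb_norm_psi2]
      exact cb_mono_aux k (norm_nonneg _) hz
    · refine ⟨mem_univ _, ?_⟩
      have hz : ‖p.2‖ < R₀ / Real.sqrt (1 + k * R₀ ^ 2) := by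
        simpa [mem_ball_zero_iff] using hp.2
      rw [mem_ball_zero_iff, cb_norm_chi2]
      exact (cb_chi_bound k hR₀ (norm_nonneg _) hz).2
  · refine ⟨fun p => (1 + (k:ℝ)*‖p.2‖^2)⁻¹, fun p _ => by positivity, fun p _ v => cb_key n k p v⟩
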